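/- The explicit formulas defining ∇ satisfy the Levi-Civita identity: for all x, y in the set {ξ_{ab}, iξ_{ab} : a,b ∈ ℤ∖{0}} and every finitely supported matrix z, one has 2⟨∇(x,y), z⟩ = ⟨[x,y], z⟩ − ⟨[y,z], x⟩ + ⟨[z,x], y⟩. Explicitly: ∇_{ξ_{ab}}ξ_{cd} = δ_{bc}λ_c²ξ_{ad} − δ_{da}λ_a²ξ_{cb} − δ_{ca}λ_d²ξ_{db} + δ_{db}λ_c²ξ_{ac} + δ_{bd}λ_a²ξ_{ca} − δ_{ac}λ_b²ξ_{bd}; ∇_{iξ_{ab}}iξ_{cd} = −δ_{bc}λ_c²ξ_{ad} + δ_{da}λ_a²ξ_{cb} − δ_{ca}λ_d²ξ_{db} + δ_{db}λ_c²ξ_{ac} + δ_{bd}λ_a²ξ_{ca} − δ_{ac}λ_b²ξ_{bd}; ∇_{ξ_{ab}}iξ_{cd} = δ_{bc}λ_c²iξ_{ad} − δ_{da}λ_a²iξ_{cb} + δ_{ca}λ_d²iξ_{db} − δ_{db}λ_c²iξ_{ac} + δ_{bd}λ_a²iξ_{ca} − δ_{ac}λ_b²iξ_{bd}; ∇_{iξ_{ab}}ξ_{cd}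 = δ_{bc}λ_c²iξ_{ad} − δ_{da}λ_a²iξ_{cb} − δ_{ca}λ_d²iξ_{db} + δ_{db}λ_c²iξ_{ac} − δ_{bd}λ_a²iξ_{ca} + δ_{ac}λ_b²iξ_{bd}. -/

import Mathlib

/-- Nonzero integers, the index set for the matrices. -/
abbrev NZ : Type := {n : ℤ // n ≠ 0}

/-- The real vector space `M` of finitely supported matrices indexed by nonzero integers. -/
abbrev MatC : Type := (NZ × NZ) →₀ ℂ

/-- Matrix multiplication of finitely supported matrices. -/
noncomputable def matMul (A B : MatC) : MatC :=
  A.sum fun p z => B.sum fun q w =>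
    if p.2 = q.1 then Finsupp.single (p.1, q.2) (z * w) else 0

/-- The Lie bracket `[A,B] = AB − BA`. -/
noncomputable def brak (A B : MatC) : MatC := matMul A B - matMul B A

/-- The real inner product `⟨A,B⟩ = Σ_{a,b} Re(A_{ab}·conj(B_{ab}))/(4λ_a²λ_b²)`. -/
noncomputable def rinner (lam : ℤ → ℝ) (A B : MatC) : ℝ :=
  A.sum fun p z => (z * (starRingEnd ℂ) (B p)).re / (4 * lam p.1.1 ^ 2 * lam p.2.1 ^ 2)

/-- The elementary matrix `e_{ab}` (for `a, b` nonzero; junk value `0` otherwise). -/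
noncomputable def eM (a b : ℤ) : MatC :=
  if h : a ≠ 0 ∧ b ≠ 0 then Finsupp.single (⟨a, h.1⟩, ⟨b, h.2⟩) 1 else 0

/-- The basis element `ξ_{ab} = 2λ_aλ_b·e_{ab}`. -/
noncomputable def xiM (lam : ℤ → ℝ) (a b : ℤ) : MatC := (2 * lam a * lam b : ℝ) • eM a b

/-- The basis element `iξ_{ab}`. -/
noncomputable def iXiM (lam : ℤ → ℝ) (a b : ℤ) : MatC := Complex.I • xiM lam a b

/-- Kronecker delta. -/
noncomputable def delz (x y : ℤ) : ℝ := if x = y then 1 else 0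

/-- The formula for `∇_{ξ_{ab}}ξ_{cd}`. -/
noncomputable def nb1 (lam : ℤ → ℝ) (a b c d : ℤ) : MatC :=
  (delz b c * lam c ^ 2) • xiM lam a d - (delz d a * lam a ^ 2) • xiM lam c b
    - (delz c a * lam d ^ 2) • xiM lam d b + (delz d b * lam c ^ 2) • xiM lam a c
    + (delz b d * lam a ^ 2) • xiM lam c a - (delz a c * lam b ^ 2) • xiM lam b d

/-- The formula for `∇_{iξ_{ab}}iξ_{cd}`. -/
noncomputable def nb2 (lam : ℤ → ℝ) (a b c d : ℤ) : MatC :=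
  (delz d a * lam a ^ 2) • xiM lam c b - (delz b c * lam c ^ 2) • xiM lam a d
    - (delz c a * lam d ^ 2) • xiM lam d b + (delz d b * lam c ^ 2) • xiM lam a c
    + (delz b d * lam a ^ 2) • xiM lam c a - (delz a c * lam b ^ 2) • xiM lam b d

/-- The formula for `∇_{ξ_{ab}}iξ_{cd}`. -/
noncomputable def nb3 (lam : ℤ → ℝ) (a b c d : ℤ) : MatC :=
  (delz b c * lam c ^ 2) • iXiM lam a d - (delz d a * lam a ^ 2) • iXiM lam c b
    + (delz c a * lam d ^ 2) • iXiM lam d b - (delz d b * lam c ^ 2) • iXiM lam a c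
    + (delz b d * lam a ^ 2) • iXiM lam c a - (delz a c * lam b ^ 2) • iXiM lam b d

/-- The formula for `∇_{iξ_{ab}}ξ_{cd}`. -/
noncomputable def nb4 (lam : ℤ → ℝ) (a b c d : ℤ) : MatC :=
  (delz b c * lam c ^ 2) • iXiM lam a d - (delz d a * lam a ^ 2) • iXiM lam c b
    - (delz c a * lam d ^ 2) • iXiM lam d b + (delz d b * lam c ^ 2) • iXiM lam a c
    - (delz b d * lam a ^ 2) • iXiM lam c a + (delz a c * lam b ^ 2) • iXiM lam b d

set_option maxHeartbeats 10000000


section LCAux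

lemma matMul_single_single (s t : NZ × NZ) (u v : ℂ) :
    matMul (Finsupp.single s u) (Finsupp.single t v) =
      if s.2 = t.1 then Finsupp.single (s.1, t.2) (u * v) else 0 := by
  unfold matMul
  rw [Finsupp.sum_single_index, Finsupp.sum_single_index]
  · split <;> simp
  · simp

lemma matMul_zero_right (A : MatC) : matMul A 0 = 0 := by unfold matMul; simp
lemma matMul_zero_left (A : MatC) : matMul 0 A = 0 := by unfold matMul; simp

lemma matMul_add_right (A B C : MatC) : matMul A (B + C) = matMul A B + matMul A C := by
  unfold matMul
  rw [← Finsupp.sum_add]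
  congr 1; funext p z
  rw [Finsupp.sum_add_index'] <;> intros <;> split <;> simp [mul_add, Finsupp.single_add]

lemma matMul_add_left (A B C : MatC) : matMul (A + B) C = matMul A C + matMul B C := by
  unfold matMul
  rw [Finsupp.sum_add_index'] <;> intros <;> [simp; skip]
  rw [← Finsupp.sum_add]
  congr 1; funext q w
  split <;> simp [add_mul, Finsupp.single_add]

lemma brak_add_right (A B C : MatC) : brak A (B + C) = brak A B + brak A C := by
  unfold brak
  rw [matMul_add_right, matMul_add_left]; abel

lemma brak_add_left (A B C : MatC) : brak (A + B) C = brak A C + brak B C := by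
  unfold brak
  rw [matMul_add_right, matMul_add_left]; abel

lemma brak_zero_right (A : MatC) : brak A 0 = 0 := by
  unfold brak; rw [matMul_zero_right, matMul_zero_left, sub_zero]

lemma brak_zero_left (A : MatC) : brak 0 A = 0 := by
  unfold brak; rw [matMul_zero_right, matMul_zero_left, zero_sub, neg_zero]

lemma rinner_add_left (lam : ℤ → ℝ) (A B C : MatC) :
    rinner lam (A + B) C = rinner lam A C + rinner lam B C := by
  unfold rinner
  rw [Finsupp.sum_add_index'] <;> intros <;> simp [add_mul, add_div]

lemma rinner_add_right (lam : ℤ → ℝ) (A B C : MatC) :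
    rinner lam A (B + C) = rinner lam A B + rinner lam A C := by
  unfold rinner
  rw [← Finsupp.sum_add]
  congr 1; funext p z
  simp [mul_add, add_div]

lemma rinner_zero_left (lam : ℤ → ℝ) (A : MatC) : rinner lam 0 A = 0 := by
  unfold rinner; simp

lemma rinner_zero_right (lam : ℤ → ℝ) (A : MatC) : rinner lam A 0 = 0 := by
  unfold rinner; simp

lemma rinner_single_right (lam : ℤ → ℝ) (A : MatC) (s : NZ × NZ) (w : ℂ) :
    rinner lam A (Finsupp.single s w) =
      (A s * (starRingEnd ℂ) w).re / (4 * lam s.1.1 ^ 2 * lam s.2.1 ^ 2) := by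
  unfold rinner
  rw [Finsupp.sum]
  rcases eq_or_ne (A s) 0 with h | h
  · rw [Finset.sum_eq_zero, h]
    · simp
    · intro p hp
      rw [Finsupp.single_apply, if_neg, map_zero, mul_zero]
      · simp
      · rintro rfl; exact (Finsupp.mem_support_iff.mp hp) h
  · rw [Finset.sum_eq_single s]
    · rw [Finsupp.single_apply, if_pos rfl]
    · intro p _ hps
      rw [Finsupp.single_apply, if_neg (fun h => hps h.symm), map_zero, mul_zero]
      simp
    · intro hs; exact (hs (Finsupp.mem_support_iff.mpr h)).elim

lemma xiM_single (lam : ℤ → ℝ) (a b : ℤ) (ha : a ≠ 0) (hb : b ≠ 0) :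
    xiM lam a b = Finsupp.single ((⟨a, ha⟩ : NZ), (⟨b, hb⟩ : NZ)) ((2 * lam a * lam b : ℝ) : ℂ) := by
  unfold xiM eM
  rw [dif_pos ⟨ha, hb⟩, Finsupp.smul_single]
  norm_num [Complex.real_smul]

lemma iXiM_single (lam : ℤ → ℝ) (a b : ℤ) (ha : a ≠ 0) (hb : b ≠ 0) :
    iXiM lam a b = Finsupp.single ((⟨a, ha⟩ : NZ), (⟨b, hb⟩ : NZ))
      (Complex.I * ((2 * lam a * lam b : ℝ) : ℂ)) := by
  unfold iXiM
  rw [xiM_single lam a b ha hb, Finsupp.smul_single, smul_eq_mul]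

/-- The Levi-Civita statement against a test matrix `z`. -/
def LCP (lam : ℤ → ℝ) (n x y z : MatC) : Prop :=
  2 * rinner lam n z =
    rinner lam (brak x y) z - rinner lam (brak y z) x + rinner lam (brak z x) y

lemma LCP_reduce (lam : ℤ → ℝ) (n x y : MatC)
    (h : ∀ (s : NZ × NZ) (w : ℂ), LCP lam n x y (Finsupp.single s w)) (z : MatC) :
    LCP lam n x y z := by
  induction z using Finsupp.induction with
  | zero =>
      unfold LCP
      rw [rinner_zero_right, rinner_zero_right, brak_zero_right, brak_zero_left,
        rinner_zero_left, rinner_zero_left]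
      ring
  | single_add s w f hs hw ih =>
      have hsw := h s w
      unfold LCP at hsw ih ⊢
      rw [rinner_add_right, rinner_add_right, brak_add_right, brak_add_left,
        rinner_add_left, rinner_add_left]
      linarith

end LCAux

section LCParts

variable {lam : ℤ → ℝ}

lemma LC_part1 (hpos : ∀ i : ℤ, i ≠ 0 → 0 < lam i)
    (a b c d p q : ℤ) (ha : a ≠ 0) (hb : b ≠ 0) (hc : c ≠ 0) (hd : d ≠ 0)
    (hp : p ≠ 0) (hq : q ≠ 0) (w : ℂ) :
    LCP lam (nb1 lam a b c d) (xiM lam a b) (xiM lam c d)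
      (Finsupp.single ((⟨p, hp⟩ : NZ), (⟨q, hq⟩ : NZ)) w) := by
  unfold LCP nb1
  simp only [brak, xiM_single lam a b ha hb, xiM_single lam c d hc hd,
    iXiM_single lam a b ha hb, iXiM_single lam c d hc hd,
    matMul_single_single, rinner_single_right, Finsupp.sub_apply, Finsupp.add_apply,
    Finsupp.smul_apply, Finsupp.single_apply,
    apply_ite (fun f : MatC => f ((⟨p, hp⟩ : NZ), (⟨q, hq⟩ : NZ))),
    apply_ite (fun f : MatC => f ((⟨a, ha⟩ : NZ), (⟨b, hb⟩ : NZ))),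
    apply_ite (fun f : MatC => f ((⟨c, hc⟩ : NZ), (⟨d, hd⟩ : NZ))),
    xiM_single lam a d ha hd, xiM_single lam c b hc hb, xiM_single lam d b hd hb,
    xiM_single lam a c ha hc, xiM_single lam c a hc ha, xiM_single lam b d hb hd,
    iXiM_single lam a d ha hd, iXiM_single lam c b hc hb, iXiM_single lam d b hd hb,
    iXiM_single lam a c ha hc, iXiM_single lam c a hc ha, iXiM_single lam b d hb hd,
    Finsupp.coe_zero, Pi.zero_apply, Prod.mk.injEq, Subtype.mk.injEq, delz,
    ite_and, ite_smul, smul_ite, zero_smul, smul_zero, mul_ite, ite_mul, zero_mul, mul_zero,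
    sub_zero, zero_sub, add_zero, zero_add, Complex.real_smul]
  have h0 : ∀ x : ℤ, x ≠ 0 → lam x ≠ 0 := fun x hx => (hpos x hx).ne'
  have hA := h0 a ha; have hB := h0 b hb; have hC := h0 c hc; have hD := h0 d hd
  have hP := h0 p hp; have hQ := h0 q hq
  simp only [show ∀ x y : ℤ, (x = y) ↔ (y = x) from fun x y => eq_comm, one_mul]
  simp only [sub_mul, add_mul, ite_mul, zero_mul, mul_ite, mul_zero, map_mul,
    Complex.conj_I, Complex.conj_ofReal, neg_mul, mul_neg, neg_neg, neg_zero,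
    Complex.sub_re, Complex.add_re, Complex.neg_re, apply_ite Complex.re, Complex.zero_re,
    Complex.mul_re, Complex.mul_im, Complex.ofReal_re, Complex.ofReal_im,
    Complex.I_re, Complex.I_im, Complex.conj_re, Complex.conj_im,
    mul_zero, zero_mul, sub_zero, zero_sub, mul_one, one_mul,
    neg_zero, mul_neg, neg_neg, add_zero, zero_add]
  field_simp
  by_cases h1 : b = c <;> by_cases h2 : a = d <;> by_cases h3 : a = c <;> by_cases h4 : b = d <;>
    simp only [h1, h2, h3, h4, eq_self_iff_true, if_true, if_false, ite_true, ite_false,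
      not_false_iff, zero_mul, mul_zero, add_zero, zero_add, sub_zero, zero_sub] <;>
    split_ifs <;> first | omega | (subst_vars; ring)

lemma LC_part2 (hpos : ∀ i : ℤ, i ≠ 0 → 0 < lam i)
    (a b c d p q : ℤ) (ha : a ≠ 0) (hb : b ≠ 0) (hc : c ≠ 0) (hd : d ≠ 0)
    (hp : p ≠ 0) (hq : q ≠ 0) (w : ℂ) :
    LCP lam (nb2 lam a b c d) (iXiM lam a b) (iXiM lam c d)
      (Finsupp.single ((⟨p, hp⟩ : NZ), (⟨q, hq⟩ : NZ)) w) := by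
  unfold LCP nb2
  simp only [brak, xiM_single lam a b ha hb, xiM_single lam c d hc hd,
    iXiM_single lam a b ha hb, iXiM_single lam c d hc hd,
    matMul_single_single, rinner_single_right, Finsupp.sub_apply, Finsupp.add_apply,
    Finsupp.smul_apply, Finsupp.single_apply,
    apply_ite (fun f : MatC => f ((⟨p, hp⟩ : NZ), (⟨q, hq⟩ : NZ))),
    apply_ite (fun f : MatC => f ((⟨a, ha⟩ : NZ), (⟨b, hb⟩ : NZ))),
    apply_ite (fun f : MatC => f ((⟨c, hc⟩ : NZ), (⟨d, hd⟩ : NZ))),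
    xiM_single lam a d ha hd, xiM_single lam c b hc hb, xiM_single lam d b hd hb,
    xiM_single lam a c ha hc, xiM_single lam c a hc ha, xiM_single lam b d hb hd,
    iXiM_single lam a d ha hd, iXiM_single lam c b hc hb, iXiM_single lam d b hd hb,
    iXiM_single lam a c ha hc, iXiM_single lam c a hc ha, iXiM_single lam b d hb hd,
    Finsupp.coe_zero, Pi.zero_apply, Prod.mk.injEq, Subtype.mk.injEq, delz,
    ite_and, ite_smul, smul_ite, zero_smul, smul_zero, mul_ite, ite_mul, zero_mul, mul_zero,
    sub_zero, zero_sub, add_zero, zero_add, Complex.real_smul]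
  have h0 : ∀ x : ℤ, x ≠ 0 → lam x ≠ 0 := fun x hx => (hpos x hx).ne'
  have hA := h0 a ha; have hB := h0 b hb; have hC := h0 c hc; have hD := h0 d hd
  have hP := h0 p hp; have hQ := h0 q hq
  simp only [show ∀ x y : ℤ, (x = y) ↔ (y = x) from fun x y => eq_comm, one_mul]
  simp only [sub_mul, add_mul, ite_mul, zero_mul, mul_ite, mul_zero, map_mul,
    Complex.conj_I, Complex.conj_ofReal, neg_mul, mul_neg, neg_neg, neg_zero,
    Complex.sub_re, Complex.add_re, Complex.neg_re, apply_ite Complex.re, Complex.zero_re,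
    Complex.mul_re, Complex.mul_im, Complex.ofReal_re, Complex.ofReal_im,
    Complex.I_re, Complex.I_im, Complex.conj_re, Complex.conj_im,
    mul_zero, zero_mul, sub_zero, zero_sub, mul_one, one_mul,
    neg_zero, mul_neg, neg_neg, add_zero, zero_add]
  field_simp
  by_cases h1 : b = c <;> by_cases h2 : a = d <;> by_cases h3 : a = c <;> by_cases h4 : b = d <;>
    simp only [h1, h2, h3, h4, eq_self_iff_true, if_true, if_false, ite_true, ite_false,
      not_false_iff, zero_mul, mul_zero, add_zero, zero_add, sub_zero, zero_sub] <;>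
    split_ifs <;> first | omega | (subst_vars; ring)

lemma LC_part3 (hpos : ∀ i : ℤ, i ≠ 0 → 0 < lam i)
    (a b c d p q : ℤ) (ha : a ≠ 0) (hb : b ≠ 0) (hc : c ≠ 0) (hd : d ≠ 0)
    (hp : p ≠ 0) (hq : q ≠ 0) (w : ℂ) :
    LCP lam (nb3 lam a b c d) (xiM lam a b) (iXiM lam c d)
      (Finsupp.single ((⟨p, hp⟩ : NZ), (⟨q, hq⟩ : NZ)) w) := by
  unfold LCP nb3
  simp only [brak, xiM_single lam a b ha hb, xiM_single lam c d hc hd,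
    iXiM_single lam a b ha hb, iXiM_single lam c d hc hd,
    matMul_single_single, rinner_single_right, Finsupp.sub_apply, Finsupp.add_apply,
    Finsupp.smul_apply, Finsupp.single_apply,
    apply_ite (fun f : MatC => f ((⟨p, hp⟩ : NZ), (⟨q, hq⟩ : NZ))),
    apply_ite (fun f : MatC => f ((⟨a, ha⟩ : NZ), (⟨b, hb⟩ : NZ))),
    apply_ite (fun f : MatC => f ((⟨c, hc⟩ : NZ), (⟨d, hd⟩ : NZ))),
    xiM_single lam a d ha hd, xiM_single lam c b hc hb, xiM_single lam d b hd hb,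
    xiM_single lam a c ha hc, xiM_single lam c a hc ha, xiM_single lam b d hb hd,
    iXiM_single lam a d ha hd, iXiM_single lam c b hc hb, iXiM_single lam d b hd hb,
    iXiM_single lam a c ha hc, iXiM_single lam c a hc ha, iXiM_single lam b d hb hd,
    Finsupp.coe_zero, Pi.zero_apply, Prod.mk.injEq, Subtype.mk.injEq, delz,
    ite_and, ite_smul, smul_ite, zero_smul, smul_zero, mul_ite, ite_mul, zero_mul, mul_zero,
    sub_zero, zero_sub, add_zero, zero_add, Complex.real_smul]
  have h0 : ∀ x : ℤ, x ≠ 0 → lam x ≠ 0 := fun x hx => (hpos x hx).ne'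
  have hA := h0 a ha; have hB := h0 b hb; have hC := h0 c hc; have hD := h0 d hd
  have hP := h0 p hp; have hQ := h0 q hq
  simp only [show ∀ x y : ℤ, (x = y) ↔ (y = x) from fun x y => eq_comm, one_mul]
  simp only [sub_mul, add_mul, ite_mul, zero_mul, mul_ite, mul_zero, map_mul,
    Complex.conj_I, Complex.conj_ofReal, neg_mul, mul_neg, neg_neg, neg_zero,
    Complex.sub_re, Complex.add_re, Complex.neg_re, apply_ite Complex.re, Complex.zero_re,
    Complex.mul_re, Complex.mul_im, Complex.ofReal_re, Complex.ofReal_im,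
    Complex.I_re, Complex.I_im, Complex.conj_re, Complex.conj_im,
    mul_zero, zero_mul, sub_zero, zero_sub, mul_one, one_mul,
    neg_zero, mul_neg, neg_neg, add_zero, zero_add]
  field_simp
  by_cases h1 : b = c <;> by_cases h2 : a = d <;> by_cases h3 : a = c <;> by_cases h4 : b = d <;>
    simp only [h1, h2, h3, h4, eq_self_iff_true, if_true, if_false, ite_true, ite_false,
      not_false_iff, zero_mul, mul_zero, add_zero, zero_add, sub_zero, zero_sub] <;>
    split_ifs <;> first | omega | (subst_vars; ring)

lemma LC_part4 (hpos : ∀ i : ℤ, i ≠ 0 → 0 < lam i)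
    (a b c d p q : ℤ) (ha : a ≠ 0) (hb : b ≠ 0) (hc : c ≠ 0) (hd : d ≠ 0)
    (hp : p ≠ 0) (hq : q ≠ 0) (w : ℂ) :
    LCP lam (nb4 lam a b c d) (iXiM lam a b) (xiM lam c d)
      (Finsupp.single ((⟨p, hp⟩ : NZ), (⟨q, hq⟩ : NZ)) w) := by
  unfold LCP nb4
  simp only [brak, xiM_single lam a b ha hb, xiM_single lam c d hc hd,
    iXiM_single lam a b ha hb, iXiM_single lam c d hc hd,
    matMul_single_single, rinner_single_right, Finsupp.sub_apply, Finsupp.add_apply,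
    Finsupp.smul_apply, Finsupp.single_apply,
    apply_ite (fun f : MatC => f ((⟨p, hp⟩ : NZ), (⟨q, hq⟩ : NZ))),
    apply_ite (fun f : MatC => f ((⟨a, ha⟩ : NZ), (⟨b, hb⟩ : NZ))),
    apply_ite (fun f : MatC => f ((⟨c, hc⟩ : NZ), (⟨d, hd⟩ : NZ))),
    xiM_single lam a d ha hd, xiM_single lam c b hc hb, xiM_single lam d b hd hb,
    xiM_single lam a c ha hc, xiM_single lam c a hc ha, xiM_single lam b d hb hd,
    iXiM_single lam a d ha hd, iXiM_single lam c b hc hb, iXiM_single lam d b hd hb,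
    iXiM_single lam a c ha hc, iXiM_single lam c a hc ha, iXiM_single lam b d hb hd,
    Finsupp.coe_zero, Pi.zero_apply, Prod.mk.injEq, Subtype.mk.injEq, delz,
    ite_and, ite_smul, smul_ite, zero_smul, smul_zero, mul_ite, ite_mul, zero_mul, mul_zero,
    sub_zero, zero_sub, add_zero, zero_add, Complex.real_smul]
  have h0 : ∀ x : ℤ, x ≠ 0 → lam x ≠ 0 := fun x hx => (hpos x hx).ne'
  have hA := h0 a ha; have hB := h0 b hb; have hC := h0 c hc; have hD := h0 d hd
  have hP := h0 p hp; have hQ := h0 q hq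
  simp only [show ∀ x y : ℤ, (x = y) ↔ (y = x) from fun x y => eq_comm, one_mul]
  simp only [sub_mul, add_mul, ite_mul, zero_mul, mul_ite, mul_zero, map_mul,
    Complex.conj_I, Complex.conj_ofReal, neg_mul, mul_neg, neg_neg, neg_zero,
    Complex.sub_re, Complex.add_re, Complex.neg_re, apply_ite Complex.re, Complex.zero_re,
    Complex.mul_re, Complex.mul_im, Complex.ofReal_re, Complex.ofReal_im,
    Complex.I_re, Complex.I_im, Complex.conj_re, Complex.conj_im,
    mul_zero, zero_mul, sub_zero, zero_sub, mul_one, one_mul,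
    neg_zero, mul_neg, neg_neg, add_zero, zero_add]
  field_simp
  by_cases h1 : b = c <;> by_cases h2 : a = d <;> by_cases h3 : a = c <;> by_cases h4 : b = d <;>
    simp only [h1, h2, h3, h4, eq_self_iff_true, if_true, if_false, ite_true, ite_false,
      not_false_iff, zero_mul, mul_zero, add_zero, zero_add, sub_zero, zero_sub] <;>
    split_ifs <;> first | omega | (subst_vars; ring)

end LCParts


/-- The explicit formulas for `∇` on the orthonormal basis `{ξ_{ab}, iξ_{ab}}` satisfy the
Levi-Civita identity `2⟨∇(x,y), z⟩ = ⟨[x,y],z⟩ − ⟨[y,z],x⟩ + ⟨[z,x],y⟩` against every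
finitely supported matrix `z`. -/
theorem levi_civita_identity (lam : ℤ → ℝ) (hpos : ∀ i : ℤ, i ≠ 0 → 0 < lam i)
    (hsym : ∀ i : ℤ, lam (-i) = lam i)
    (a b c d : ℤ) (ha : a ≠ 0) (hb : b ≠ 0) (hc : c ≠ 0) (hd : d ≠ 0) (z : MatC) :
    (2 * rinner lam (nb1 lam a b c d) z =
      rinner lam (brak (xiM lam a b) (xiM lam c d)) z
        - rinner lam (brak (xiM lam c d) z) (xiM lam a b)
        + rinner lam (brak z (xiM lam a b)) (xiM lam c d)) ∧
    (2 * rinner lam (nb2 lam a b c d) z =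
      rinner lam (brak (iXiM lam a b) (iXiM lam c d)) z
        - rinner lam (brak (iXiM lam c d) z) (iXiM lam a b)
        + rinner lam (brak z (iXiM lam a b)) (iXiM lam c d)) ∧
    (2 * rinner lam (nb3 lam a b c d) z =
      rinner lam (brak (xiM lam a b) (iXiM lam c d)) z
        - rinner lam (brak (iXiM lam c d) z) (xiM lam a b)
        + rinner lam (brak z (xiM lam a b)) (iXiM lam c d)) ∧
    (2 * rinner lam (nb4 lam a b c d) z =
      rinner lam (brak (iXiM lam a b) (xiM lam c d)) z
        - rinner lam (brak (xiM lam c d) z) (iXiM lam a b)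
        + rinner lam (brak z (iXiM lam a b)) (xiM lam c d)) := by
  refine ⟨?_, ?_, ?_, ?_⟩
  · exact LCP_reduce lam _ _ _
      (fun s w => by
        obtain ⟨⟨p, hp⟩, ⟨q, hq⟩⟩ := s
        exact LC_part1 hpos a b c d p q ha hb hc hd hp hq w) z
  · exact LCP_reduce lam _ _ _
      (fun s w => by
        obtain ⟨⟨p, hp⟩, ⟨q, hq⟩⟩ := s
        exact LC_part2 hpos a b c d p q ha hb hc hd hp hq w) z
  · exact LCP_reduce lam _ _ _
      (fun s w => by
        obtain ⟨⟨p, hp⟩, ⟨q, hq⟩⟩ := s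
        exact LC_part3 hpos a b c d p q ha hb hc hd hp hq w) z
  · exact LCP_reduce lam _ _ _
      (fun s w => by
        obtain ⟨⟨p, hp⟩, ⟨q, hq⟩⟩ := s
        exact LC_part4 hpos a b c d p q ha hb hc hd hp hq w) z
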